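/- arXiv:1409.8532 — 2 statements merged into one kernel-verified Lean document; each statement's English description precedes it below -/
import Mathlib

section
/- Let H ∈ (1/2,1). There exists a constant C > 0, independent of n, such that for every n ≥ 1, every f : ℝ → ℝ continuously differentiable with bounded derivative, and all 0 ≤ t_1 ≤ t_2, the empirical spectral measures of the n×n matrix fractional Brownian motion satisfy E[ |⟨μ_{t_2}^{(n)}, f⟩ − ⟨μ_{t_1}^{(n)}, f⟩|⁴ ] ≤ C ‖f′‖_∞⁴ |t_2 − t_1|^{4H}. -/
open MeasureTheory ProbabilityTheory Filter Topology Real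
open scoped ENNReal NNReal

noncomputable section

/-- The fractional Brownian motion covariance `R_H(t,s) = ((t^{2H} + s^{2H} - |t-s|^{2H})/2`. -/
def RH (H t s : ℝ) : ℝ := (t ^ (2 * H) + s ^ (2 * H) - |t - s| ^ (2 * H)) / 2

/-- `b` is a fractional Brownian motion with Hurst parameter `H` on the probability space
`(Ω, P)`: it has continuous sample paths on `[0,∞)` and its finite-dimensional distributions
are centered Gaussian with covariance `R_H`, expressed via one-dimensional marginals of all
linear combinations. -/
def IsFBM {Ω : Type*} [MeasurableSpace Ω] (H : ℝ) (P : Measure Ω) (b : Ω → ℝ → ℝ) : Prop :=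
  (∀ ω, ContinuousOn (b ω) (Set.Ici 0)) ∧
  (∀ t : ℝ, Measurable fun ω => b ω t) ∧
  ∀ (m : ℕ) (t : Fin m → ℝ), (∀ i, 0 ≤ t i) → ∀ c : Fin m → ℝ,
    P.map (fun ω => ∑ i, c i * b ω (t i)) =
      gaussianReal 0 (∑ i, ∑ j, c i * c j * RH H (t i) (t j)).toNNReal

/-- The entries `b i j`, `i ≤ j`, form a family of independent fractional Brownian motions
with Hurst parameter `H`. -/
def IsMatrixFBM {Ω : Type*} [MeasurableSpace Ω] (H : ℝ) (n : ℕ) (P : Measure Ω)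
    (b : Fin n → Fin n → Ω → ℝ → ℝ) : Prop :=
  (∀ i j : Fin n, i ≤ j → IsFBM H P (b i j)) ∧
  iIndepFun (m := fun _ : {q : Fin n × Fin n // q.1 ≤ q.2} => (MeasurableSpace.pi :
      MeasurableSpace (ℝ → ℝ)))
    (fun p ω => fun t : ℝ => b p.1.1 p.1.2 ω t) P

/-- The renormalized symmetric matrix fractional Brownian motion
`B^{(n)}(t) = B(t)/√n` with `B_{ij} = b_{ij}` for `i < j` and `B_{ii} = √2 b_{ii}`. -/
def fbmMatrix {Ω : Type*} (n : ℕ) (b : Fin n → Fin n → Ω → ℝ → ℝ) (ω : Ω) (t : ℝ) :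
    Matrix (Fin n) (Fin n) ℝ :=
  (Real.sqrt n)⁻¹ • Matrix.of fun i j =>
    if i = j then Real.sqrt 2 * b i i ω t
    else if i < j then b i j ω t else b j i ω t

/-- The eigenvalues of a symmetric real matrix, listed in increasing order
(junk value `0` if the matrix is not symmetric). -/
def eigs {n : ℕ} (A : Matrix (Fin n) (Fin n) ℝ) : Fin n → ℝ :=
  if hA : A.IsHermitian then hA.eigenvalues ∘ Tuple.sort hA.eigenvalues else 0

/-- The empirical spectral measure `(1/n) ∑ δ_{λ_i(A)}` of a symmetric real matrix. -/
def empMeasure {n : ℕ} (A : Matrix (Fin n) (Fin n) ℝ) : Measure ℝ :=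
  (n : ℝ≥0∞)⁻¹ • ∑ i : Fin n, Measure.dirac (eigs A i)

/-- The semicircle law of variance `v > 0`, with density
`x ↦ √(4v - x²)/(2πv)` on `[-2√v, 2√v]`; for `v ≤ 0` it is `δ₀`. -/
def semicircle (v : ℝ) : Measure ℝ :=
  if v ≤ 0 then Measure.dirac 0
  else volume.withDensity
    (Set.indicator (Set.Icc (-(2 * Real.sqrt v)) (2 * Real.sqrt v))
      (fun x => ENNReal.ofReal (Real.sqrt (4 * v - x ^ 2) / (2 * Real.pi * v))))

/-- The difference-quotient kernel `(f'(x)-f'(y))/(x-y)`, interpreted as `f''(x)` on the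
diagonal. -/
def dq (f' f'' : ℝ → ℝ) (x y : ℝ) : ℝ := if x = y then f'' x else (f' x - f' y) / (x - y)

/-- The measure-valued evolution equation (⋆): for every `f ∈ C_b²(ℝ)` and `t ≥ 0`,
`⟨ν_t, f⟩ = f(0) + H ∫_0^t s^{2H-1} ∫∫ ((f'(x)-f'(y))/(x-y)) ν_s(dx) ν_s(dy) ds`. -/
def SatisfiesStar (H : ℝ) (ν : ℝ → Measure ℝ) : Prop :=
  ∀ f f' f'' : ℝ → ℝ,
    (∀ x, HasDerivAt f (f' x) x) → (∀ x, HasDerivAt f' (f'' x) x) → Continuous f'' →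
    (∃ C, ∀ x, |f x| ≤ C) → (∃ C, ∀ x, |f' x| ≤ C) → (∃ C, ∀ x, |f'' x| ≤ C) →
    ∀ t : ℝ, 0 ≤ t →
      ∫ x, f x ∂(ν t) =
        f 0 + H * ∫ s in Set.Ioc (0 : ℝ) t,
          s ^ (2 * H - 1) * ∫ x, ∫ y, dq f' f'' x y ∂(ν s) ∂(ν s)

/-- The time-indexed path of measures associated to a continuous `ProbabilityMeasure`-valued
path indexed by `ℝ≥0`. -/
def pathMeasure (μ : C(ℝ≥0, ProbabilityMeasure ℝ)) : ℝ → Measure ℝ :=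
  fun s => (μ (Real.toNNReal s) : Measure ℝ)

/-- The Cauchy–Stieltjes transform of the semicircle law of variance `v`. -/
def scTransform (v : ℝ) (z : ℂ) : ℂ := ∫ x : ℝ, ((x : ℂ) - z)⁻¹ ∂(semicircle v)


section AuxHW
open Matrix Finset

variable {n : ℕ}

variable {n : ℕ}

def frobSq (M : Matrix (Fin n) (Fin n) ℝ) : ℝ := ∑ i, ∑ j, (M i j)^2

lemma frobSq_eq_trace (M : Matrix (Fin n) (Fin n) ℝ) : frobSq M = Matrix.trace (star M * M) := by
  simp only [frobSq, Matrix.trace, Matrix.diag, Matrix.mul_apply, Matrix.star_apply,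
    Matrix.star_eq_conjTranspose, Matrix.conjTranspose_apply, star_trivial]
  rw [Finset.sum_comm]
  congr 1; ext i; congr 1; ext j; ring

lemma frobSq_conj {U V : Matrix (Fin n) (Fin n) ℝ} (hU : U ∈ Matrix.unitaryGroup (Fin n) ℝ)
    (hV : V ∈ Matrix.unitaryGroup (Fin n) ℝ) (M : Matrix (Fin n) (Fin n) ℝ) :
    frobSq (U * M * star V) = frobSq M := by
  have hU' : star U * U = 1 := (Matrix.mem_unitaryGroup_iff'.mp hU)
  have hV' : star V * V = 1 := (Matrix.mem_unitaryGroup_iff'.mp hV)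
  rw [frobSq_eq_trace, frobSq_eq_trace]
  have : star (U * M * star V) * (U * M * star V) = V * (star M * M) * star V := by
    have : star (U * M * star V) = V * star M * star U := by
      simp only [StarMul.star_mul, star_star, Matrix.mul_assoc]
    rw [this]
    calc V * star M * star U * (U * M * star V)
        = V * star M * (star U * U) * M * star V := by noncomm_ring
      _ = V * (star M * M) * star V := by rw [hU']; noncomm_ring
  rw [this, Matrix.trace_mul_cycle, ← Matrix.mul_assoc, hV', Matrix.one_mul]

lemma rearrange (u v : Fin n → ℝ) (hu : Monotone u) (hv : Monotone v) (perm3 : Equiv.Perm (Fin n)) :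
    ∑ i, (u i - v i)^2 ≤ ∑ i, (u i - v (perm3 i))^2 := by
  have h1 : ∑ i, (v (perm3 i))^2 = ∑ i, (v i)^2 := Equiv.sum_comp perm3 (fun i => (v i)^2)
  have h2 : ∑ i, u i * v (perm3 i) ≤ ∑ i, u i * v i :=
    (hu.monovary hv).sum_mul_comp_perm_le_sum_mul
  have e1 : ∑ i, (u i - v i)^2 = ∑ i, (u i)^2 + ∑ i, (v i)^2 - 2 * ∑ i, u i * v i := by
    simp only [Finset.mul_sum, ← Finset.sum_add_distrib, ← Finset.sum_sub_distrib]
    congr 1; ext i; ring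
  have e2 : ∑ i, (u i - v (perm3 i))^2
      = ∑ i, (u i)^2 + ∑ i, (v (perm3 i))^2 - 2 * ∑ i, u i * v (perm3 i) := by
    simp only [Finset.mul_sum, ← Finset.sum_add_distrib, ← Finset.sum_sub_distrib]
    congr 1; ext i; ring
  rw [e1, e2, h1]; linarith


lemma eigs_eq {A : Matrix (Fin n) (Fin n) ℝ} (hA : A.IsHermitian) :
    eigs A = hA.eigenvalues ∘ Tuple.sort hA.eigenvalues := dif_pos hA

lemma eigs_monotone {A : Matrix (Fin n) (Fin n) ℝ} (hA : A.IsHermitian) :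
    Monotone (eigs A) := by
  rw [eigs_eq hA]; exact Tuple.monotone_sort _

lemma hoffman_wielandt {A B : Matrix (Fin n) (Fin n) ℝ} (hA : A.IsHermitian)
    (hB : B.IsHermitian) :
    ∑ i, (eigs A i - eigs B i)^2 ≤ frobSq (A - B) := by
  set U : Matrix (Fin n) (Fin n) ℝ := ↑hA.eigenvectorUnitary with hUdef
  set V : Matrix (Fin n) (Fin n) ℝ := ↑hB.eigenvectorUnitary with hVdef
  set lam := hA.eigenvalues with hlam
  set mu := hB.eigenvalues with hmu
  have hUmem : U ∈ Matrix.unitaryGroup (Fin n) ℝ := SetLike.coe_mem _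
  have hVmem : V ∈ Matrix.unitaryGroup (Fin n) ℝ := SetLike.coe_mem _
  have hU1 : U * star U = 1 := Matrix.mem_unitaryGroup_iff.mp hUmem
  have hU1' : star U * U = 1 := Matrix.mem_unitaryGroup_iff'.mp hUmem
  have hV1 : V * star V = 1 := Matrix.mem_unitaryGroup_iff.mp hVmem
  have hV1' : star V * V = 1 := Matrix.mem_unitaryGroup_iff'.mp hVmem
  have hspecA : A = U * Matrix.diagonal lam * star U := by
    have := hA.spectral_theorem
    rwa [RCLike.ofReal_real_eq_id, Function.id_comp] at this
  have hspecB : B = V * Matrix.diagonal mu * star V := by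
    have := hB.spectral_theorem
    rwa [RCLike.ofReal_real_eq_id, Function.id_comp] at this
  set W : Matrix (Fin n) (Fin n) ℝ := star U * V with hWdef
  have hWW : W * star W = 1 := by
    have : star W = star V * U := by
      rw [hWdef, StarMul.star_mul, star_star]
    rw [this, hWdef]
    calc star U * V * (star V * U) = star U * (V * star V) * U := by noncomm_ring
      _ = 1 := by rw [hV1, Matrix.mul_one, hU1']
  have hWW' : star W * W = 1 := by
    have : star W = star V * U := by rw [hWdef, StarMul.star_mul, star_star]
    rw [this, hWdef]
    calc star V * U * (star U * V) = star V * (U * star U) * V := by noncomm_ring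
      _ = 1 := by rw [hU1, Matrix.mul_one, hV1']
  have hrow : ∀ i, ∑ j, (W i j)^2 = 1 := by
    intro i
    have := congrFun (congrFun hWW i) i
    simp only [Matrix.mul_apply, Matrix.one_apply_eq, Matrix.star_eq_conjTranspose,
      Matrix.conjTranspose_apply, star_trivial] at this
    rw [← this]; congr 1; ext j; ring
  have hcol : ∀ j, ∑ i, (W i j)^2 = 1 := by
    intro j
    have := congrFun (congrFun hWW' j) j
    simp only [Matrix.mul_apply, Matrix.one_apply_eq, Matrix.star_eq_conjTranspose,
      Matrix.conjTranspose_apply, star_trivial] at this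
    rw [← this]; congr 1; ext i; ring
  have key : A - B = U * (Matrix.diagonal lam * W - W * Matrix.diagonal mu) * star V := by
    rw [Matrix.mul_sub, Matrix.sub_mul, hspecA, hspecB, hWdef]
    congr 1
    · calc U * Matrix.diagonal lam * star U
          = U * Matrix.diagonal lam * (star U * (V * star V)) := by
            rw [hV1, Matrix.mul_one]
        _ = U * (Matrix.diagonal lam * (star U * V)) * star V := by noncomm_ring
    · calc V * Matrix.diagonal mu * star V
          = (U * star U) * (V * (Matrix.diagonal mu * star V)) := by
            rw [hU1, Matrix.one_mul, Matrix.mul_assoc]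
        _ = U * (star U * V * Matrix.diagonal mu) * star V := by noncomm_ring
  have hfrob : frobSq (A - B) = ∑ i, ∑ j, (W i j)^2 * (lam i - mu j)^2 := by
    rw [key, frobSq_conj hUmem hVmem]
    simp only [frobSq, Matrix.sub_apply, Matrix.diagonal_mul, Matrix.mul_diagonal]
    congr 1; ext i; congr 1; ext j; ring
  -- doubly stochastic
  have hS : Matrix.of (fun i j => (W i j)^2) ∈ doublyStochastic ℝ (Fin n) := by
    rw [mem_doublyStochastic_iff_sum]
    exact ⟨fun i j => sq_nonneg _, fun i => hrow i, fun j => hcol j⟩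
  obtain ⟨w, hw0, hw1, hwsum⟩ := exists_eq_sum_perm_of_mem_doublyStochastic hS
  set T := ∑ i, (eigs A i - eigs B i)^2 with hT
  -- per-permutation bound
  have hperm : ∀ σ : Equiv.Perm (Fin n), T ≤ ∑ i, (lam i - mu (σ i))^2 := by
    intro σ
    set ρ := Tuple.sort lam with hρ
    set τ := Tuple.sort mu with hτ
    set perm3 : Equiv.Perm (Fin n) := (ρ.trans σ).trans τ.symm with hperm3
    have hre : ∑ i, (lam i - mu (σ i))^2 = ∑ i, (eigs A i - eigs B (perm3 i))^2 := by
      rw [← Equiv.sum_comp ρ (fun i => (lam i - mu (σ i))^2)]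
      congr 1; ext i
      have h1 : eigs A i = lam (ρ i) := by rw [eigs_eq hA]; rfl
      have h2 : eigs B (perm3 i) = mu (σ (ρ i)) := by
        rw [eigs_eq hB]
        simp only [Function.comp_apply, hperm3, Equiv.trans_apply, Equiv.apply_symm_apply]
        exact congrArg mu (τ.apply_symm_apply _)
      rw [h1, h2]
    rw [hre]
    exact rearrange _ _ (eigs_monotone hA) (eigs_monotone hB) perm3
  -- combine
  rw [hfrob]
  rw [hT] at *
  have hexpand : ∑ i, ∑ j, (W i j)^2 * (lam i - mu j)^2
      = ∑ σ : Equiv.Perm (Fin n), w σ * ∑ i, (lam i - mu (σ i))^2 := by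
    have hentry : ∀ i j, (W i j)^2 = ∑ σ : Equiv.Perm (Fin n), w σ * (σ.permMatrix ℝ) i j := by
      intro i j
      have h := congrFun (congrFun hwsum.symm i) j
      simp only [Matrix.sum_apply, Matrix.smul_apply, smul_eq_mul] at h
      exact h
    calc ∑ i, ∑ j, (W i j)^2 * (lam i - mu j)^2
        = ∑ i, ∑ j, ∑ σ : Equiv.Perm (Fin n),
            w σ * ((σ.permMatrix ℝ) i j * (lam i - mu j)^2) := by
          refine Finset.sum_congr rfl fun i _ => Finset.sum_congr rfl fun j _ => ?_
          rw [hentry i j, Finset.sum_mul]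
          refine Finset.sum_congr rfl fun σ _ => by ring
      _ = ∑ i, ∑ σ : Equiv.Perm (Fin n), ∑ j,
            w σ * ((σ.permMatrix ℝ) i j * (lam i - mu j)^2) :=
          Finset.sum_congr rfl fun i _ => Finset.sum_comm ..
      _ = ∑ σ : Equiv.Perm (Fin n), ∑ i, ∑ j,
            w σ * ((σ.permMatrix ℝ) i j * (lam i - mu j)^2) := Finset.sum_comm ..
      _ = ∑ σ : Equiv.Perm (Fin n), w σ * ∑ i, ∑ j,
            (σ.permMatrix ℝ) i j * (lam i - mu j)^2 := by
          refine Finset.sum_congr rfl fun σ _ => ?_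
          simp [Finset.mul_sum]
      _ = ∑ σ : Equiv.Perm (Fin n), w σ * ∑ i, (lam i - mu (σ i))^2 := by
          refine Finset.sum_congr rfl fun σ _ => ?_
          congr 1
          refine Finset.sum_congr rfl fun i _ => ?_
          simp [Equiv.Perm.permMatrix, PEquiv.toMatrix_apply, Equiv.toPEquiv_apply,
            ite_mul, Finset.sum_ite_eq, Finset.sum_ite_eq']
  rw [hexpand]
  calc T = ∑ σ : Equiv.Perm (Fin n), w σ * T := by
        rw [← Finset.sum_mul, hw1, one_mul]
    _ ≤ ∑ σ : Equiv.Perm (Fin n), w σ * ∑ i, (lam i - mu (σ i))^2 := by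
        apply Finset.sum_le_sum
        intro σ _
        exact mul_le_mul_of_nonneg_left (hperm σ) (hw0 σ)

lemma frobSq_nonneg (M : Matrix (Fin n) (Fin n) ℝ) : 0 ≤ frobSq M :=
  Finset.sum_nonneg fun _ _ => Finset.sum_nonneg fun _ _ => sq_nonneg _

lemma frobSq_smul (c : ℝ) (M : Matrix (Fin n) (Fin n) ℝ) :
    frobSq (c • M) = c^2 * frobSq M := by
  simp [frobSq, Matrix.smul_apply, smul_eq_mul, mul_pow, Finset.mul_sum]

lemma fbmMatrix_isHermitian {Ω : Type*} (n : ℕ) (b : Fin n → Fin n → Ω → ℝ → ℝ)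
    (ω : Ω) (t : ℝ) : (fbmMatrix n b ω t).IsHermitian := by
  rw [Matrix.IsHermitian]
  ext i j
  simp only [fbmMatrix, Matrix.conjTranspose_apply, Matrix.smul_apply, Matrix.of_apply,
    star_trivial, smul_eq_mul]
  congr 1
  by_cases h : i = j
  · subst h; simp
  · have h' : ¬ j = i := fun hh => h hh.symm
    rcases lt_or_gt_of_ne h with hlt | hgt
    · rw [if_neg h', if_neg (not_lt_of_gt hlt), if_neg h, if_pos hlt]
    · rw [if_neg h', if_pos hgt, if_neg h, if_neg (not_lt_of_gt hgt)]

lemma fbmMatrix_sub {Ω : Type*} (n : ℕ) (b : Fin n → Fin n → Ω → ℝ → ℝ)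
    (ω : Ω) (t₂ t₁ : ℝ) :
    fbmMatrix n b ω t₂ - fbmMatrix n b ω t₁ = (Real.sqrt n)⁻¹ • Matrix.of (fun i j =>
      if i = j then Real.sqrt 2 * (b i i ω t₂ - b i i ω t₁)
      else if i < j then b i j ω t₂ - b i j ω t₁ else b j i ω t₂ - b j i ω t₁) := by
  ext i j
  simp only [fbmMatrix, Matrix.sub_apply, Matrix.smul_apply, Matrix.of_apply, smul_eq_mul]
  split_ifs <;> ring

lemma pointwise_bound (hn : 1 ≤ n) (A B : Matrix (Fin n) (Fin n) ℝ)
    (hA : A.IsHermitian) (hB : B.IsHermitian) {f f' : ℝ → ℝ}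
    (hderiv : ∀ x, HasDerivAt f (f' x) x) {M : ℝ} (hM : ∀ x, |f' x| ≤ M) :
    |(n:ℝ)⁻¹ * ∑ i, f (eigs A i) - (n:ℝ)⁻¹ * ∑ i, f (eigs B i)|^4
      ≤ M^4 * ((n:ℝ)⁻¹)^2 * (frobSq (A - B))^2 := by
  have hM0 : 0 ≤ M := (abs_nonneg _).trans (hM 0)
  have hn0 : (0:ℝ) < n := by exact_mod_cast Nat.lt_of_lt_of_le Nat.zero_lt_one hn
  have hlip : ∀ x y : ℝ, |f x - f y| ≤ M * |x - y| := by
    intro x y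
    have := Convex.norm_image_sub_le_of_norm_hasDerivWithin_le
      (fun z _ => (hderiv z).hasDerivWithinAt) (fun z _ => by simpa using hM z)
      (convex_univ) (Set.mem_univ y) (Set.mem_univ x)
    simpa [Real.norm_eq_abs] using this
  set u := eigs A with hu
  set v := eigs B with hv
  have h1 : |∑ i, f (u i) - ∑ i, f (v i)| ≤ M * ∑ i, |u i - v i| := by
    rw [← Finset.sum_sub_distrib, Finset.mul_sum]
    exact (Finset.abs_sum_le_sum_abs _ _).trans
      (Finset.sum_le_sum fun i _ => hlip _ _)
  have h2 : (∑ i, |u i - v i|)^2 ≤ (n:ℝ) * ∑ i, (u i - v i)^2 := by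
    have := sq_sum_le_card_mul_sum_sq (s := (Finset.univ : Finset (Fin n)))
      (f := fun i => |u i - v i|)
    simpa [sq_abs] using this
  have h3 : ∑ i, (u i - v i)^2 ≤ frobSq (A - B) := hoffman_wielandt hA hB
  have habs : |(n:ℝ)⁻¹ * ∑ i, f (u i) - (n:ℝ)⁻¹ * ∑ i, f (v i)|
      = (n:ℝ)⁻¹ * |∑ i, f (u i) - ∑ i, f (v i)| := by
    rw [← mul_sub, abs_mul, abs_of_nonneg (inv_nonneg.2 hn0.le)]
  rw [habs]
  set D := |∑ i, f (u i) - ∑ i, f (v i)| with hD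
  set T := ∑ i, |u i - v i| with hT
  set F := frobSq (A - B) with hF
  have hF0 : 0 ≤ F := frobSq_nonneg _
  have hT0 : 0 ≤ T := Finset.sum_nonneg fun i _ => abs_nonneg _
  have hsq0 : 0 ≤ ∑ i, (u i - v i)^2 := Finset.sum_nonneg fun i _ => sq_nonneg _
  have e1 : D^4 ≤ M^4 * (T^2)^2 := by
    have h := pow_le_pow_left₀ (abs_nonneg _) h1 4
    calc D^4 ≤ (M*T)^4 := h
      _ = M^4 * (T^2)^2 := by ring
  have e2 : (T^2)^2 ≤ ((n:ℝ) * ∑ i, (u i - v i)^2)^2 := pow_le_pow_left₀ (sq_nonneg T) h2 2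
  have e3 : ((n:ℝ) * ∑ i, (u i - v i)^2)^2 ≤ ((n:ℝ) * F)^2 :=
    pow_le_pow_left₀ (mul_nonneg hn0.le hsq0) (mul_le_mul_of_nonneg_left h3 hn0.le) 2
  calc ((n:ℝ)⁻¹ * D)^4 = ((n:ℝ)⁻¹)^4 * D^4 := by ring
    _ ≤ ((n:ℝ)⁻¹)^4 * (M^4 * ((n:ℝ)*F)^2) := by
        refine mul_le_mul_of_nonneg_left ?_ (by positivity)
        exact e1.trans (mul_le_mul_of_nonneg_left (e2.trans e3) (by positivity))
    _ = M^4 * ((n:ℝ)⁻¹)^2 * F^2 * ((n:ℝ)⁻¹ * (n:ℝ))^2 := by ring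
    _ = M^4 * ((n:ℝ)⁻¹)^2 * F^2 := by
        rw [inv_mul_cancel₀ hn0.ne', one_pow, mul_one]

end AuxHW

section AuxGauss


def K4 : ℝ≥0∞ := ∫⁻ x : ℝ, ENNReal.ofReal (x^4) ∂(gaussianReal 0 1)

lemma K4_ne_top : K4 ≠ ⊤ := by
  have hint : Integrable (fun x : ℝ => gaussianPDFReal 0 1 x * x^4) := by
    have h0 : Integrable (fun x : ℝ => x ^ (4:ℝ) * Real.exp (-(1/2 : ℝ) * x^2)) :=
      integrable_rpow_mul_exp_neg_mul_sq (by norm_num) (by norm_num)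
    have h1 : Integrable (fun x : ℝ => (Real.sqrt (2 * Real.pi))⁻¹ *
        (x ^ (4:ℝ) * Real.exp (-(1/2 : ℝ) * x^2))) := h0.const_mul _
    apply h1.congr
    filter_upwards with x
    rw [gaussianPDFReal]
    push_cast
    rw [show x ^ (4:ℝ) = x ^ (4:ℕ) by rw [← Real.rpow_natCast x 4]; norm_num]
    rw [show (-(1/2 : ℝ) * x^2) = (-(x - 0)^2/(2*1)) by ring]
    ring_nf
  have hle : ∀ x : ℝ, gaussianPDF 0 1 x * ENNReal.ofReal (x^4)
      ≤ ‖gaussianPDFReal 0 1 x * x^4‖₊ := by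
    intro x
    rw [gaussianPDF, ← ENNReal.ofReal_mul (gaussianPDFReal_nonneg 0 1 x)]
    exact Real.ofReal_le_enorm _
  have : K4 = ∫⁻ x : ℝ, gaussianPDF 0 1 x * ENNReal.ofReal (x^4) := by
    rw [K4, gaussianReal_of_var_ne_zero 0 one_ne_zero,
      lintegral_withDensity_eq_lintegral_mul _ (measurable_gaussianPDF 0 1)
        (by measurability)]
    rfl
  rw [this]
  exact ((lintegral_mono hle).trans_lt hint.2).ne

lemma gauss_moment (v : ℝ≥0) :
    ∫⁻ x : ℝ, ENNReal.ofReal (x^4) ∂(gaussianReal 0 v) = ENNReal.ofReal ((v:ℝ)^2) * K4 := by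
  by_cases hv : v = 0
  · subst hv
    rw [gaussianReal_zero_var, lintegral_dirac]
    simp
  · have hmap := gaussianReal_map_const_mul (μ := 0) (v := 1) (Real.sqrt v)
    have hval : (NNReal.mk ((Real.sqrt v)^2) (sq_nonneg _)) * 1 = v := by
      ext
      simp [Real.sq_sqrt v.coe_nonneg]
    rw [mul_zero, hval] at hmap
    rw [← hmap, lintegral_map (by measurability) (measurable_const_mul _)]
    have : ∀ x : ℝ, ENNReal.ofReal ((Real.sqrt v * x)^4)
        = ENNReal.ofReal ((v:ℝ)^2) * ENNReal.ofReal (x^4) := by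
      intro x
      rw [← ENNReal.ofReal_mul (by positivity)]
      congr 1
      rw [show (Real.sqrt v * x)^4 = ((Real.sqrt v)^2)^2 * x^4 by ring,
        Real.sq_sqrt v.coe_nonneg]
    simp_rw [this]
    rw [lintegral_const_mul _ (by measurability)]
    rfl

lemma fbm_increment_moment {Ω : Type*} [MeasurableSpace Ω] {H : ℝ} (hH : 0 < H)
    {P : Measure Ω} {b : Ω → ℝ → ℝ} (hb : IsFBM H P b) {t₁ t₂ : ℝ}
    (ht₁ : 0 ≤ t₁) (h12 : t₁ ≤ t₂) :
    ∫⁻ ω, ENNReal.ofReal ((b ω t₂ - b ω t₁)^4) ∂P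
      ≤ ENNReal.ofReal ((t₂ - t₁)^(4*H)) * K4 := by
  obtain ⟨-, hmeas, hmarg⟩ := hb
  have ht₂ : 0 ≤ t₂ := ht₁.trans h12
  have hsub : 0 ≤ t₂ - t₁ := sub_nonneg.2 h12
  have hmap := hmarg 2 ![t₂, t₁] (by intro i; fin_cases i <;> assumption) ![1, -1]
  have hfun : (fun ω => ∑ i, ![(1:ℝ),-1] i * b ω (![t₂,t₁] i))
      = fun ω => b ω t₂ - b ω t₁ := by
    funext ω
    simp [Fin.sum_univ_two]
    ring
  have h2H : (2*H) ≠ 0 := by positivity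
  have hvar : (∑ i, ∑ j, ![(1:ℝ),-1] i * ![(1:ℝ),-1] j * RH H (![t₂,t₁] i) (![t₂,t₁] j))
      = (t₂ - t₁)^(2*H) := by
    simp only [Fin.sum_univ_two, Matrix.cons_val_zero, Matrix.cons_val_one, Matrix.head_cons,
      RH, sub_self, abs_zero, Real.zero_rpow h2H, abs_of_nonneg hsub, abs_sub_comm t₁ t₂,
      abs_of_nonneg hsub]
    ring
  rw [hfun, hvar] at hmap
  have hX : Measurable (fun ω => b ω t₂ - b ω t₁) := (hmeas t₂).sub (hmeas t₁)
  refine le_of_eq ?_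
  calc ∫⁻ ω, ENNReal.ofReal ((b ω t₂ - b ω t₁)^4) ∂P
      = ∫⁻ x : ℝ, ENNReal.ofReal (x^4) ∂(P.map (fun ω => b ω t₂ - b ω t₁)) :=
        (lintegral_map ((measurable_id.pow_const 4).ennreal_ofReal) hX).symm
    _ = ENNReal.ofReal ((((t₂ - t₁)^(2*H)).toNNReal : ℝ)^2) * K4 := by
        rw [hmap, gauss_moment]
    _ = ENNReal.ofReal ((t₂ - t₁)^(4*H)) * K4 := by
        congr 1
        rw [Real.coe_toNNReal _ (Real.rpow_nonneg hsub _)]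
        rw [← Real.rpow_natCast ((t₂-t₁)^(2*H)) 2, ← Real.rpow_mul hsub]
        norm_num
        ring_nf

end AuxGauss

/-- For `H ∈ (1/2,1)` there is a constant `C > 0`, independent of `n`,
such that for all `n ≥ 1`, all `f ∈ C¹` with derivative bounded by `M`, and all
`0 ≤ t₁ ≤ t₂`, `E[|⟨μ_{t₂}^{(n)},f⟩ - ⟨μ_{t₁}^{(n)},f⟩|⁴] ≤ C M⁴ |t₂-t₁|^{4H}`. -/
theorem empirical_increment_fourth_moment
    (H : ℝ) (hH : H ∈ Set.Ioo (1/2 : ℝ) 1) :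
    ∃ C : ℝ, 0 < C ∧
      ∀ (n : ℕ), 1 ≤ n → ∀ (Ω : Type) [MeasurableSpace Ω] (P : Measure Ω),
        IsProbabilityMeasure P →
        ∀ b : Fin n → Fin n → Ω → ℝ → ℝ, IsMatrixFBM H n P b →
        ∀ f f' : ℝ → ℝ, (∀ x, HasDerivAt f (f' x) x) → Continuous f' →
        ∀ M : ℝ, (∀ x, |f' x| ≤ M) →
        ∀ t₁ t₂ : ℝ, 0 ≤ t₁ → t₁ ≤ t₂ →
          ∫⁻ ω, ENNReal.ofReal
              (|(n : ℝ)⁻¹ * ∑ i, f (eigs (fbmMatrix n b ω t₂) i)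
                - (n : ℝ)⁻¹ * ∑ i, f (eigs (fbmMatrix n b ω t₁) i)| ^ 4) ∂P
            ≤ ENNReal.ofReal (C * M ^ 4 * (t₂ - t₁) ^ (4 * H)) := by
  classical
  refine ⟨4 * K4.toReal + 1, by positivity, ?_⟩
  intro n hn Ω _ P hP b hb f f' hf hf'cont M hM t₁ t₂ ht₁ h12
  have hH0 : (0:ℝ) < H := lt_trans (by norm_num) hH.1
  obtain ⟨hfbm, -⟩ := hb
  have hM0 : 0 ≤ M := (abs_nonneg _).trans (hM 0)
  have hn0 : (0:ℝ) < n := by exact_mod_cast Nat.lt_of_lt_of_le Nat.zero_lt_one hn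
  have hsub : 0 ≤ t₂ - t₁ := sub_nonneg.2 h12
  set R := (t₂ - t₁)^(4*H) with hR
  have hR0 : 0 ≤ R := Real.rpow_nonneg hsub _
  set e : Fin n × Fin n → Ω → ℝ := fun p ω =>
    if p.1 = p.2 then Real.sqrt 2 * (b p.1 p.1 ω t₂ - b p.1 p.1 ω t₁)
    else if p.1 < p.2 then b p.1 p.2 ω t₂ - b p.1 p.2 ω t₁
    else b p.2 p.1 ω t₂ - b p.2 p.1 ω t₁ with he
  have hmeas_b : ∀ i j : Fin n, i ≤ j → ∀ t : ℝ, Measurable fun ω => b i j ω t :=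
    fun i j hij t => (hfbm i j hij).2.1 t
  have hmeas_e : ∀ p, Measurable (e p) := by
    rintro ⟨i, j⟩
    by_cases h1 : i = j
    · simp only [he, h1, if_pos]
      exact ((hmeas_b j j le_rfl t₂).sub (hmeas_b j j le_rfl t₁)).const_mul _
    · by_cases h2 : i < j
      · simp only [he, if_neg h1, if_pos h2]
        exact (hmeas_b i j h2.le t₂).sub (hmeas_b i j h2.le t₁)
      · simp only [he, if_neg h1, if_neg h2]
        exact (hmeas_b j i (not_lt.mp h2) t₂).sub (hmeas_b j i (not_lt.mp h2) t₁)
  have hpt : ∀ ω, |(n:ℝ)⁻¹ * ∑ i, f (eigs (fbmMatrix n b ω t₂) i)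
      - (n:ℝ)⁻¹ * ∑ i, f (eigs (fbmMatrix n b ω t₁) i)|^4
      ≤ M^4 * ((n:ℝ)⁻¹)^2 * ∑ p : Fin n × Fin n, (e p ω)^4 := by
    intro ω
    refine (pointwise_bound hn _ _ (fbmMatrix_isHermitian n b ω t₂)
      (fbmMatrix_isHermitian n b ω t₁) hf hM).trans ?_
    refine mul_le_mul_of_nonneg_left ?_ (by positivity)
    have hFG : frobSq (fbmMatrix n b ω t₂ - fbmMatrix n b ω t₁)
        = (n:ℝ)⁻¹ * ∑ p : Fin n × Fin n, (e p ω)^2 := by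
      rw [fbmMatrix_sub, frobSq_smul]
      congr 1
      · rw [inv_pow, Real.sq_sqrt (Nat.cast_nonneg n)]
      · simp only [frobSq, Matrix.of_apply, Fintype.sum_prod_type]
        rfl
    have hcs : (∑ p : Fin n × Fin n, (e p ω)^2)^2
        ≤ ((n:ℝ)*(n:ℝ)) * ∑ p : Fin n × Fin n, ((e p ω)^2)^2 := by
      have h := sq_sum_le_card_mul_sum_sq (s := (Finset.univ : Finset (Fin n × Fin n)))
        (f := fun p => (e p ω)^2)
      simpa using h
    have h44 : ∀ p : Fin n × Fin n, ((e p ω)^2)^2 = (e p ω)^4 := fun p => by ring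
    simp only [h44] at hcs
    calc (frobSq (fbmMatrix n b ω t₂ - fbmMatrix n b ω t₁))^2
        = ((n:ℝ)⁻¹)^2 * (∑ p : Fin n × Fin n, (e p ω)^2)^2 := by rw [hFG]; ring
      _ ≤ ((n:ℝ)⁻¹)^2 * (((n:ℝ)*(n:ℝ)) * ∑ p : Fin n × Fin n, (e p ω)^4) :=
          mul_le_mul_of_nonneg_left hcs (by positivity)
      _ = ((n:ℝ)⁻¹*(n:ℝ))^2 * ∑ p : Fin n × Fin n, (e p ω)^4 := by ring
      _ = ∑ p : Fin n × Fin n, (e p ω)^4 := by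
          rw [inv_mul_cancel₀ hn0.ne', one_pow, one_mul]
  have hent : ∀ p : Fin n × Fin n, ∫⁻ ω, ENNReal.ofReal ((e p ω)^4) ∂P
      ≤ ENNReal.ofReal (4 * R) * K4 := by
    rintro ⟨i, j⟩
    have hRle : ENNReal.ofReal R * K4 ≤ ENNReal.ofReal (4 * R) * K4 :=
      mul_le_mul_left (ENNReal.ofReal_le_ofReal (by linarith)) _
    by_cases h1 : i = j
    · simp only [he, h1, if_pos]
      have h4 : ∀ x : ℝ, (Real.sqrt 2 * x)^4 = 4 * x^4 := by
        intro x
        rw [show (Real.sqrt 2 * x)^4 = ((Real.sqrt 2)^2)^2 * x^4 by ring,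
          Real.sq_sqrt (by norm_num : (0:ℝ) ≤ 2)]
        norm_num
      have hXm : Measurable fun ω => (b j j ω t₂ - b j j ω t₁) :=
        (hmeas_b j j le_rfl t₂).sub (hmeas_b j j le_rfl t₁)
      calc ∫⁻ ω, ENNReal.ofReal ((Real.sqrt 2 * (b j j ω t₂ - b j j ω t₁))^4) ∂P
          = ∫⁻ ω, ENNReal.ofReal 4 * ENNReal.ofReal ((b j j ω t₂ - b j j ω t₁)^4) ∂P := by
            refine lintegral_congr fun ω => ?_
            rw [h4, ENNReal.ofReal_mul (by norm_num)]
        _ = ENNReal.ofReal 4 * ∫⁻ ω, ENNReal.ofReal ((b j j ω t₂ - b j j ω t₁)^4) ∂P :=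
            lintegral_const_mul _ ((hXm.pow_const 4).ennreal_ofReal)
        _ ≤ ENNReal.ofReal 4 * (ENNReal.ofReal R * K4) :=
            mul_le_mul_right (fbm_increment_moment hH0 (hfbm j j le_rfl) ht₁ h12) _
        _ = ENNReal.ofReal (4 * R) * K4 := by
            rw [← mul_assoc, ← ENNReal.ofReal_mul (by norm_num)]
    · by_cases h2 : i < j
      · simp only [he, if_neg h1, if_pos h2]
        exact (fbm_increment_moment hH0 (hfbm i j h2.le) ht₁ h12).trans hRle
      · simp only [he, if_neg h1, if_neg h2]
        exact (fbm_increment_moment hH0 (hfbm j i (not_lt.mp h2)) ht₁ h12).trans hRle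
  have hmeas_sum : Measurable fun ω => ∑ p : Fin n × Fin n, ENNReal.ofReal ((e p ω)^4) :=
    Finset.measurable_sum _ fun p _ => ((hmeas_e p).pow_const 4).ennreal_ofReal
  have hK4 : K4 = ENNReal.ofReal K4.toReal := (ENNReal.ofReal_toReal K4_ne_top).symm
  calc ∫⁻ ω, ENNReal.ofReal
        (|(n : ℝ)⁻¹ * ∑ i, f (eigs (fbmMatrix n b ω t₂) i)
          - (n : ℝ)⁻¹ * ∑ i, f (eigs (fbmMatrix n b ω t₁) i)| ^ 4) ∂P
      ≤ ∫⁻ ω, ENNReal.ofReal (M^4 * ((n:ℝ)⁻¹)^2 * ∑ p : Fin n × Fin n, (e p ω)^4) ∂P :=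
        lintegral_mono fun ω => ENNReal.ofReal_le_ofReal (hpt ω)
    _ = ∫⁻ ω, ENNReal.ofReal (M^4 * ((n:ℝ)⁻¹)^2)
          * ∑ p : Fin n × Fin n, ENNReal.ofReal ((e p ω)^4) ∂P := by
        refine lintegral_congr fun ω => ?_
        rw [ENNReal.ofReal_mul (by positivity), ENNReal.ofReal_sum_of_nonneg
          (fun p _ => by positivity)]
    _ = ENNReal.ofReal (M^4 * ((n:ℝ)⁻¹)^2)
          * ∑ p : Fin n × Fin n, ∫⁻ ω, ENNReal.ofReal ((e p ω)^4) ∂P := by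
        rw [lintegral_const_mul _ hmeas_sum,
          lintegral_finset_sum _ fun p _ => ((hmeas_e p).pow_const 4).ennreal_ofReal]
    _ ≤ ENNReal.ofReal (M^4 * ((n:ℝ)⁻¹)^2)
          * ∑ _p : Fin n × Fin n, (ENNReal.ofReal (4 * R) * K4) :=
        mul_le_mul_right (Finset.sum_le_sum fun p _ => hent p) _
    _ = ENNReal.ofReal (M^4 * ((n:ℝ)⁻¹)^2)
          * (ENNReal.ofReal ((n:ℝ)*(n:ℝ)) * (ENNReal.ofReal (4 * R)
            * ENNReal.ofReal K4.toReal)) := by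
        rw [Finset.sum_const, Finset.card_univ, Fintype.card_prod, Fintype.card_fin,
          nsmul_eq_mul, ← hK4]
        congr 2
        rw [← ENNReal.ofReal_natCast (n*n)]
        congr 1
        push_cast
        ring
    _ = ENNReal.ofReal (M^4 * ((n:ℝ)⁻¹)^2 * ((n:ℝ)*(n:ℝ)) * (4 * R) * K4.toReal) := by
        rw [← ENNReal.ofReal_mul (by positivity), ← ENNReal.ofReal_mul (by positivity),
          ← ENNReal.ofReal_mul (by positivity)]
        congr 1
        ring
    _ ≤ ENNReal.ofReal ((4 * K4.toReal + 1) * M ^ 4 * (t₂ - t₁) ^ (4 * H)) := by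
        refine ENNReal.ofReal_le_ofReal ?_
        rw [← hR]
        have hone : ((n:ℝ)⁻¹)^2 * ((n:ℝ)*(n:ℝ)) = 1 := by
          field_simp
        have hKr : 0 ≤ K4.toReal := ENNReal.toReal_nonneg
        calc M^4 * ((n:ℝ)⁻¹)^2 * ((n:ℝ)*(n:ℝ)) * (4 * R) * K4.toReal
            = (((n:ℝ)⁻¹)^2 * ((n:ℝ)*(n:ℝ))) * (4 * K4.toReal * (M^4 * R)) := by ring
          _ = 4 * K4.toReal * (M^4 * R) := by rw [hone, one_mul]
          _ ≤ (4 * K4.toReal + 1) * (M^4 * R) := by nlinarith [pow_nonneg hM0 4, hR0]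
          _ = (4 * K4.toReal + 1) * M ^ 4 * R := by ring


end
end

section
/- Let σ² > 0 and let sc(σ²) be the semicircle law of variance σ². For z ∈ ℂ with Im z > 0, define the Cauchy–Stieltjes transform G(z) = ∫_ℝ (x − z)^{−1} sc(σ²)(dx). Then G(z) satisfies the quadratic equation σ²·G(z)² + z·G(z) + 1 = 0 and Im G(z) > 0; moreover, G(z) is the unique complex number w with σ²w² + zw + 1 = 0 and Im w > 0. -/
open MeasureTheory ProbabilityTheory Filter Topology Real
open scoped ENNReal NNReal

noncomputable section

section SCaux
open Set intervalIntegral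




lemma coe_sub_ne (w : ℂ) (hw : w.im ≠ 0) (t : ℝ) : (t : ℂ) - w ≠ 0 := by
  intro h
  apply hw
  have h2 : ((t : ℂ) - w).im = -w.im := by simp
  rw [h] at h2; simpa using h2.symm

lemma inv_coe_tendsto : Tendsto (fun t : ℝ => ((t : ℂ))⁻¹) atTop (𝓝 0) := by
  have h := tendsto_inv_atTop_zero (𝕜 := ℝ)
  have h2 := (Complex.continuous_ofReal.continuousAt.tendsto.comp h)
  simp only [Function.comp_def, Complex.ofReal_inv] at h2
  simpa using h2

lemma arg_coe_sub_tendsto (w : ℂ) : Tendsto (fun t : ℝ => Complex.arg (t - w)) atTop (𝓝 0) := by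
  have hq : Tendsto (fun t : ℝ => 1 - w * ((t : ℂ))⁻¹) atTop (𝓝 1) := by
    have := inv_coe_tendsto.const_mul w
    simpa using (tendsto_const_nhds (x := (1:ℂ)) (f := atTop)).sub this
  have h1 : ContinuousAt Complex.arg 1 := Complex.continuousAt_arg (by simp [Complex.slitPlane])
  have hcont := (h1.tendsto.comp hq)
  simp only [Function.comp_def, Complex.arg_one] at hcont
  apply hcont.congr'
  filter_upwards [eventually_gt_atTop 0] with t ht
  have ht' : (t:ℂ) ≠ 0 := by exact_mod_cast ht.ne'
  have h3 : (t : ℂ) - w = (t : ℝ) * (1 - w * ((t : ℂ))⁻¹) := by field_simp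
  rw [h3, Complex.arg_real_mul _ ht]

lemma abs_ratio_tendsto (w : ℂ) (hw : w.im ≠ 0) : Tendsto (fun t : ℝ => Real.log ‖(t:ℂ) - w‖ - Real.log t) atTop (𝓝 0) := by
  have hq : Tendsto (fun t : ℝ => 1 - w * ((t : ℂ))⁻¹) atTop (𝓝 1) := by
    have := inv_coe_tendsto.const_mul w
    simpa using (tendsto_const_nhds (x := (1:ℂ)) (f := atTop)).sub this
  have habs : Tendsto (fun t : ℝ => ‖1 - w * ((t : ℂ))⁻¹‖) atTop (𝓝 1) := by
    have := (continuous_norm.continuousAt (x := (1:ℂ))).tendsto.comp hq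
    simpa [Function.comp_def] using this
  have hlog : Tendsto (fun t : ℝ => Real.log (‖1 - w * ((t : ℂ))⁻¹‖)) atTop (𝓝 0) := by
    have := (Real.continuousAt_log (by norm_num)).tendsto.comp habs
    simpa [Function.comp_def] using this
  apply hlog.congr'
  filter_upwards [eventually_gt_atTop 0] with t ht
  have ht' : (t:ℂ) ≠ 0 := by exact_mod_cast ht.ne'
  have h3 : (t : ℂ) - w = (t : ℝ) * (1 - w * ((t : ℂ))⁻¹) := by field_simp
  have hne2 : ‖1 - w * ((t : ℂ))⁻¹‖ ≠ 0 := by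
    intro h
    have h4 : (1 : ℂ) - w * ((t:ℂ))⁻¹ = 0 := by
      simpa using (norm_eq_zero.mp h)
    have h5 : (t : ℂ) - w = 0 := by rw [h3, h4, mul_zero]
    exact coe_sub_ne w hw t h5
  rw [h3, norm_mul, Real.log_mul (by simpa using ht.ne') hne2, Complex.norm_real,
    Real.norm_eq_abs, abs_of_pos ht]
  ring

lemma log_sub_log_tendsto (w₁ w₂ : ℂ) (h1 : w₁.im ≠ 0) (h2 : w₂.im ≠ 0) :
    Tendsto (fun t : ℝ => Complex.log ((t : ℂ) - w₁) - Complex.log ((t : ℂ) - w₂)) atTop (𝓝 0) := by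
  have key : ∀ t : ℝ, Complex.log ((t : ℂ) - w₁) - Complex.log ((t : ℂ) - w₂) =
      ((Real.log ‖(t:ℂ) - w₁‖ - Real.log t) -
       (Real.log ‖(t:ℂ) - w₂‖ - Real.log t) : ℝ) +
      ((Complex.arg ((t:ℂ) - w₁) : ℝ) - (Complex.arg ((t:ℂ) - w₂) : ℝ)) * Complex.I := by
    intro t
    rw [Complex.log, Complex.log]
    push_cast
    ring
  simp only [key]
  have hre := (abs_ratio_tendsto w₁ h1).sub (abs_ratio_tendsto w₂ h2)
  have harg := (arg_coe_sub_tendsto w₁).sub (arg_coe_sub_tendsto w₂)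
  have hre' : Tendsto (fun t : ℝ => (((Real.log ‖(t:ℂ) - w₁‖ - Real.log t) -
       (Real.log ‖(t:ℂ) - w₂‖ - Real.log t) : ℝ) : ℂ)) atTop (𝓝 0) := by
    have := (Complex.continuous_ofReal.continuousAt.tendsto.comp (by simpa using hre))
    simpa [Function.comp_def] using this
  have harg' : Tendsto (fun t : ℝ => (((Complex.arg ((t:ℂ) - w₁) : ℝ) -
      (Complex.arg ((t:ℂ) - w₂) : ℝ) : ℝ) : ℂ) * Complex.I) atTop (𝓝 0) := by
    have h3 := (Complex.continuous_ofReal.continuousAt.tendsto.comp (by simpa using harg))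
    simp only [Function.comp_def] at h3
    have := h3.mul_const Complex.I
    simpa using this
  have := hre'.add harg'
  simpa using this

lemma rat_term_tendsto (a : ℝ) : Tendsto (fun t : ℝ => ((2*a*t/(t^2+1) : ℝ) : ℂ)) atTop (𝓝 0) := by
  have h : Tendsto (fun t : ℝ => 2*a*t/(t^2+1)) atTop (𝓝 0) := by
    have hb : Tendsto (fun t : ℝ => 2*|a|/t) atTop (𝓝 0) :=
      Tendsto.div_atTop tendsto_const_nhds tendsto_id
    apply squeeze_zero_norm' _ hb
    filter_upwards [eventually_gt_atTop 1] with t ht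
    have ht0 : 0 < t := lt_trans one_pos ht
    have h2 : t^2 + 1 > 0 := by positivity
    rw [Real.norm_eq_abs, abs_div, abs_of_pos h2, abs_mul, abs_mul]
    rw [div_le_div_iff₀ h2 ht0]
    have : |t| = t := abs_of_pos ht0
    rw [this, abs_two]
    nlinarith [abs_nonneg a, sq_nonneg t]
  have := (Complex.continuous_ofReal.continuousAt.tendsto.comp h)
  simpa [Function.comp_def] using this


def Phi (a : ℝ) (z β : ℂ) (t : ℝ) : ℂ :=
  (-β*((a:ℂ)+z)) * (Complex.log ((t:ℂ) - β) - Complex.log ((t:ℂ) + β))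
  + Complex.I * z * (Complex.log ((t:ℂ) - Complex.I) - Complex.log ((t:ℂ) + Complex.I))
  - 2*(a:ℂ)*(t:ℂ)/((t:ℂ)^2+1)

lemma im_ne_slit {w : ℂ} (h : w.im ≠ 0) : w ∈ Complex.slitPlane :=
  Or.inr h

lemma coe_sq_add_one_ne (t : ℝ) : ((t:ℂ)^2 + 1) ≠ 0 := by
  intro h
  have : ((t:ℂ)^2+1).re = t^2+1 := by
    simp [Complex.add_re, Complex.sq_norm]
    norm_cast
  rw [h] at this
  simp at this
  nlinarith [sq_nonneg t]

lemma hasDerivAt_coe_sub (c : ℂ) (t : ℝ) : HasDerivAt (fun s : ℝ => (s:ℂ) - c) 1 t := by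
  simpa using (Complex.ofRealCLM.hasDerivAt (x := t)).sub_const c

lemma hasDerivAt_coe_add (c : ℂ) (t : ℝ) : HasDerivAt (fun s : ℝ => (s:ℂ) + c) 1 t := by
  simpa using (Complex.ofRealCLM.hasDerivAt (x := t)).add_const c

lemma phi_hasDeriv (a : ℝ) (z β : ℂ) (hβ : β.im < 0) (t : ℝ) :
    HasDerivAt (Phi a z β)
      ((-β*((a:ℂ)+z)) * (((t:ℂ)-β)⁻¹ - ((t:ℂ)+β)⁻¹)
        + Complex.I*z*(((t:ℂ)-Complex.I)⁻¹ - ((t:ℂ)+Complex.I)⁻¹)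
        - (2*(a:ℂ)*((t:ℂ)^2+1) - 2*(a:ℂ)*(t:ℂ)*(2*(t:ℂ)))/(((t:ℂ)^2+1)^2)) t := by
  have him : ∀ s : ℝ, ((s:ℂ)).im = 0 := fun s => Complex.ofReal_im s
  have h1 : HasDerivAt (fun s : ℝ => Complex.log ((s:ℂ) - β)) (((t:ℂ)-β)⁻¹) t := by
    have := (hasDerivAt_coe_sub β t).clog_real (by
      apply im_ne_slit; simp only [Complex.sub_im, Complex.ofReal_im, zero_sub, neg_ne_zero]
      exact hβ.ne)
    simpa using this
  have h2 : HasDerivAt (fun s : ℝ => Complex.log ((s:ℂ) + β)) (((t:ℂ)+β)⁻¹) t := by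
    have := (hasDerivAt_coe_add β t).clog_real (by
      apply im_ne_slit; simp only [Complex.add_im, Complex.ofReal_im, zero_add]
      exact hβ.ne)
    simpa using this
  have h3 : HasDerivAt (fun s : ℝ => Complex.log ((s:ℂ) - Complex.I)) (((t:ℂ)-Complex.I)⁻¹) t := by
    have := (hasDerivAt_coe_sub Complex.I t).clog_real (by apply im_ne_slit; simp)
    simpa using this
  have h4 : HasDerivAt (fun s : ℝ => Complex.log ((s:ℂ) + Complex.I)) (((t:ℂ)+Complex.I)⁻¹) t := by
    have := (hasDerivAt_coe_add Complex.I t).clog_real (by apply im_ne_slit; simp)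
    simpa using this
  have h5 : HasDerivAt (fun s : ℝ => 2*(a:ℂ)*(s:ℂ)) (2*(a:ℂ)) t := by
    simpa using (Complex.ofRealCLM.hasDerivAt (x := t)).const_mul (2*(a:ℂ))
  have hofReal : HasDerivAt (fun s : ℝ => (s:ℂ)) 1 t := by
    simpa using hasDerivAt_coe_sub 0 t
  have h6 : HasDerivAt (fun s : ℝ => ((s:ℂ)^2+1)) (2*(t:ℂ)) t := by
    have heq : (fun s : ℝ => ((s:ℂ)^2+1)) = fun s : ℝ => (s:ℂ)*(s:ℂ)+1 := funext fun s => by ring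
    rw [heq]
    convert (hofReal.mul hofReal).add_const 1 using 1
    · rfl
    · funext s; simp only [Pi.mul_apply]
    ring
  have h7 := (h5.div h6 (coe_sq_add_one_ne t))
  exact (((h1.sub h2).const_mul (-β*((a:ℂ)+z))).add ((h3.sub h4).const_mul (Complex.I*z))).sub h7

lemma phi_tendsto_atTop (a : ℝ) (z β : ℂ) (hβ : β.im < 0) :
    Tendsto (Phi a z β) atTop (𝓝 0) := by
  have l1 : Tendsto (fun t : ℝ => Complex.log ((t:ℂ) - β) - Complex.log ((t:ℂ) + β)) atTop (𝓝 0) := by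
    have := log_sub_log_tendsto β (-β) hβ.ne
      (by simp only [Complex.neg_im, neg_ne_zero]; exact hβ.ne)
    simpa [sub_neg_eq_add] using this
  have l2 : Tendsto (fun t : ℝ => Complex.log ((t:ℂ) - Complex.I) - Complex.log ((t:ℂ) + Complex.I)) atTop (𝓝 0) := by
    have := log_sub_log_tendsto Complex.I (-Complex.I) (by simp) (by simp)
    simpa [sub_neg_eq_add] using this
  have l3 : Tendsto (fun t : ℝ => 2*(a:ℂ)*(t:ℂ)/((t:ℂ)^2+1)) atTop (𝓝 0) := by
    apply (rat_term_tendsto a).congr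
    intro t
    push_cast
    ring
  have h := ((l1.const_mul (-β*((a:ℂ)+z))).add (l2.const_mul (Complex.I*z))).sub l3
  simp only [mul_zero, add_zero, sub_zero, zero_add] at h
  exact h.congr (fun t => by simp only [Phi]; try ring)

lemma phi_continuousAt_zero (a : ℝ) (z β : ℂ) (hβ : β.im < 0) :
    ContinuousAt (Phi a z β) 0 := by
  have hcoe : Continuous (fun t : ℝ => (t:ℂ)) := Complex.continuous_ofReal
  have hlog : ∀ c : ℂ, ((0:ℝ):ℂ) - c ∈ Complex.slitPlane →
      ContinuousAt (fun t : ℝ => Complex.log ((t:ℂ) - c)) 0 := by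
    intro c hc
    exact ContinuousAt.comp (g := Complex.log) (f := fun t : ℝ => (t:ℂ) - c) (x := (0:ℝ))
      (continuousAt_clog hc) ((hcoe.sub continuous_const).continuousAt)
  have hlog' : ∀ c : ℂ, ((0:ℝ):ℂ) + c ∈ Complex.slitPlane →
      ContinuousAt (fun t : ℝ => Complex.log ((t:ℂ) + c)) 0 := by
    intro c hc
    exact ContinuousAt.comp (g := Complex.log) (f := fun t : ℝ => (t:ℂ) + c) (x := (0:ℝ))
      (continuousAt_clog hc) ((hcoe.add continuous_const).continuousAt)
  have c1 := hlog β (by apply im_ne_slit; simpa using hβ.ne)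
  have c2 := hlog' β (by apply im_ne_slit; simpa using hβ.ne)
  have c3 := hlog Complex.I (by apply im_ne_slit; simp)
  have c4 := hlog' Complex.I (by apply im_ne_slit; simp)
  have c5 : ContinuousAt (fun t : ℝ => 2*(a:ℂ)*(t:ℂ)/((t:ℂ)^2+1)) 0 := by
    apply ContinuousAt.div
    · exact (continuous_const.mul hcoe).continuousAt
    · exact (((hcoe.pow 2).add continuous_const)).continuousAt
    · simpa using coe_sq_add_one_ne 0
  exact (((c1.sub c2).const_mul _).add ((c3.sub c4).const_mul _)).sub c5

lemma log_neg_sub_log (β : ℂ) (hβ : β.im < 0) :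
    Complex.log (-β) - Complex.log β = Real.pi * Complex.I := by
  rw [Complex.log, Complex.log, Complex.arg_neg_eq_arg_add_pi_of_im_neg hβ, norm_neg]
  push_cast
  ring

lemma phi_zero_val (a : ℝ) (z β : ℂ) (hβ : β.im < 0) :
    Phi a z β 0 = Real.pi * Complex.I * (-β*((a:ℂ)+z)) + Real.pi * z := by
  have h0 : ((0:ℝ):ℂ) = 0 := by norm_num
  rw [Phi, h0]
  rw [zero_sub, zero_add, zero_sub, zero_add, log_neg_sub_log β hβ, Complex.log_neg_I,
    Complex.log_I]
  field_simp
  linear_combination (-2*z*(Real.pi:ℂ)) * Complex.I_sq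

lemma coe_sub_ne' (w : ℂ) (hw : w.im ≠ 0) (t : ℝ) : (t : ℂ) - w ≠ 0 := by
  intro h
  apply hw
  have h2 : ((t : ℂ) - w).im = -w.im := by simp
  rw [h] at h2; simpa using h2.symm

lemma coe_add_ne' (w : ℂ) (hw : w.im ≠ 0) (t : ℝ) : (t : ℂ) + w ≠ 0 := by
  have := coe_sub_ne' (-w) (by simpa using hw) t
  simpa [sub_neg_eq_add] using this

lemma F_hasDeriv (a : ℝ) (ha : 0 < a) (z β : ℂ) (hz : 0 < z.im) (hβ : β.im < 0)
    (hβ2 : β^2 * ((a:ℂ) + z) = (a:ℂ) - z) {x : ℝ} (hx1 : -a < x) (hx2 : x < a) :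
    HasDerivAt (fun y : ℝ => Phi a z β (Real.sqrt (a - y) / Real.sqrt (a + y)))
      (-((Real.sqrt (a^2 - x^2) : ℝ) / ((x:ℂ) - z))) x := by
  have hax : 0 < a - x := by linarith
  have hax' : 0 < a + x := by linarith
  have hu : 0 < Real.sqrt (a - x) := Real.sqrt_pos.mpr hax
  have hw : 0 < Real.sqrt (a + x) := Real.sqrt_pos.mpr hax'
  set u : ℝ := Real.sqrt (a - x) with hu_def
  set w : ℝ := Real.sqrt (a + x) with hw_def
  have hu2 : u^2 = a - x := Real.sq_sqrt hax.le
  have hw2 : w^2 = a + x := Real.sq_sqrt hax'.le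
  -- inner derivative
  have hdu : HasDerivAt (fun y : ℝ => Real.sqrt (a - y)) (1/(2*u) * (-1)) x := by
    have hinner : HasDerivAt (fun y : ℝ => a - y) (-1) x := (hasDerivAt_id x).const_sub a
    exact (Real.hasDerivAt_sqrt hax.ne').comp x hinner
  have hdw : HasDerivAt (fun y : ℝ => Real.sqrt (a + y)) (1/(2*w) * 1) x := by
    have hinner : HasDerivAt (fun y : ℝ => a + y) 1 x := by
      simpa using (hasDerivAt_id x).const_add a
    exact (Real.hasDerivAt_sqrt hax'.ne').comp x hinner
  have hτ : HasDerivAt (fun y : ℝ => Real.sqrt (a - y) / Real.sqrt (a + y))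
      ((1/(2*u) * (-1) * w - u * (1/(2*w) * 1)) / w^2) x := hdu.div hdw hw.ne'
  set T : ℝ := u / w with hT_def
  set τ' : ℝ := (1/(2*u) * (-1) * w - u * (1/(2*w) * 1)) / w^2 with hτ'_def
  have hPhiT := phi_hasDeriv a z β hβ T
  set D : ℂ := ((-β*((a:ℂ)+z)) * (((T:ℂ)-β)⁻¹ - ((T:ℂ)+β)⁻¹)
        + Complex.I*z*(((T:ℂ)-Complex.I)⁻¹ - ((T:ℂ)+Complex.I)⁻¹)
        - (2*(a:ℂ)*((T:ℂ)^2+1) - 2*(a:ℂ)*(T:ℂ)*(2*(T:ℂ)))/(((T:ℂ)^2+1)^2)) with hD_def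
  have hcomp : HasDerivAt (fun y : ℝ => Phi a z β (Real.sqrt (a - y) / Real.sqrt (a + y)))
      (τ' • D) x := by
    exact HasDerivAt.scomp_of_eq x hPhiT hτ rfl
  have key : (τ' : ℂ) * D = -((Real.sqrt (a^2 - x^2) : ℝ) / ((x:ℂ) - z)) := by
    set X : ℂ := (x:ℂ) with hX_def
    have hXz : X - z ≠ 0 := coe_sub_ne' z hz.ne' x
    have hzX : z - X ≠ 0 := fun h => hXz (by rw [← neg_sub] at h; simpa using (neg_eq_zero.mp h))
    have haz : (a:ℂ) + z ≠ 0 := coe_add_ne' z hz.ne' a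
    have haX : (a:ℂ) + X ≠ 0 := by
      rw [hX_def, show (a:ℂ) + (x:ℂ) = ((a+x : ℝ) : ℂ) by push_cast; ring]
      exact_mod_cast hax'.ne'
    have haC : (a:ℂ) ≠ 0 := by exact_mod_cast ha.ne'
    have hTβ : (T:ℂ) - β ≠ 0 := coe_sub_ne' β hβ.ne T
    have hTβ' : (T:ℂ) + β ≠ 0 := coe_add_ne' β hβ.ne T
    have hTmI : (T:ℂ) - Complex.I ≠ 0 := coe_sub_ne' Complex.I (by simp) T
    have hTpI : (T:ℂ) + Complex.I ≠ 0 := coe_add_ne' Complex.I (by simp) T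
    have hT21 : ((T:ℂ)^2+1) ≠ 0 := coe_sq_add_one_ne T
    have hT2mβne : (T:ℂ)^2 - β^2 ≠ 0 := by
      have hfac : ((T:ℂ)-β)*((T:ℂ)+β) = (T:ℂ)^2 - β^2 := by ring
      rw [← hfac]; exact mul_ne_zero hTβ hTβ'
    have hT2R : T^2 = (a-x)/(a+x) := by rw [hT_def, div_pow, hu2, hw2]
    have hT2C : ((T:ℂ))^2 = ((a:ℂ)-X)/((a:ℂ)+X) := by
      have := congrArg (fun r : ℝ => (r : ℂ)) hT2R
      push_cast at this
      simpa using this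
    have hβsq : β^2 = ((a:ℂ)-z)/((a:ℂ)+z) := by rw [eq_div_iff haz]; exact hβ2
    have hT2mβ : (T:ℂ)^2 - β^2 = 2*(a:ℂ)*(z-X)/(((a:ℂ)+X)*((a:ℂ)+z)) := by
      rw [hT2C, hβsq]; field_simp; ring
    have hT21' : (T:ℂ)^2+1 = 2*(a:ℂ)/((a:ℂ)+X) := by
      rw [hT2C]; field_simp; ring
    have h5 : 1 - (T:ℂ)^2 = 2*X/((a:ℂ)+X) := by
      rw [hT2C]; field_simp; ring
    have e1 : ((T:ℂ)-β)⁻¹ - ((T:ℂ)+β)⁻¹ = 2*β/((T:ℂ)^2-β^2) := by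
      field_simp
      ring
    have hnum1 : -β*((a:ℂ)+z)*(2*β) = -2*((a:ℂ)-z) := by linear_combination (-2)*hβ2
    have h1 : (-β*((a:ℂ)+z)) * (((T:ℂ)-β)⁻¹ - ((T:ℂ)+β)⁻¹) = -2*((a:ℂ)-z)/((T:ℂ)^2-β^2) := by
      rw [e1, ← mul_div_assoc, hnum1]
    have hTI : ((T:ℂ)-Complex.I)*((T:ℂ)+Complex.I) = (T:ℂ)^2+1 := by
      linear_combination (-1:ℂ)*Complex.I_sq
    have e2 : ((T:ℂ)-Complex.I)⁻¹ - ((T:ℂ)+Complex.I)⁻¹ = 2*Complex.I/((T:ℂ)^2+1) := by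
      field_simp
      linear_combination (2*Complex.I) * Complex.I_sq
    have h2 : Complex.I*z*(((T:ℂ)-Complex.I)⁻¹ - ((T:ℂ)+Complex.I)⁻¹) = -2*z/((T:ℂ)^2+1) := by
      rw [e2]
      field_simp
      linear_combination z*Complex.I_sq
    have hnum : 2*(a:ℂ)*((T:ℂ)^2+1) - 2*(a:ℂ)*(T:ℂ)*(2*(T:ℂ)) = 2*(a:ℂ)*(1-(T:ℂ)^2) := by ring
    have hD2 : D = -2*((a:ℂ)-z)/((T:ℂ)^2-β^2) + (-2*z/((T:ℂ)^2+1))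
        - 2*(a:ℂ)*(1-(T:ℂ)^2)/(((T:ℂ)^2+1)^2) := by
      rw [hD_def, h1, h2, hnum]
    have hsq : Real.sqrt (a^2-x^2) = u*w := by
      rw [show a^2-x^2 = (a-x)*(a+x) by ring, ← hu2, ← hw2, hu2, hw2]
      exact Real.sqrt_mul hax.le (a+x)
    have hτ'R : τ' = -a/(u*w*(a+x)) := by
      rw [hτ'_def]
      field_simp
      linear_combination (-(a+x))*hu2 + (a-x)*hw2
    have hUC : ((u:ℝ):ℂ) ≠ 0 := by exact_mod_cast hu.ne'
    have hWC : ((w:ℝ):ℂ) ≠ 0 := by exact_mod_cast hw.ne'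
    have huwC : (((u:ℝ):ℂ)*((w:ℝ):ℂ))^2 = (a:ℂ)^2 - X^2 := by
      have hr : (u*w)^2 = a^2 - x^2 := by
        rw [mul_pow, hu2, hw2]; ring
      have := congrArg (fun r : ℝ => (r : ℂ)) hr
      push_cast at this
      simpa using this
    have hτ'C : ((τ':ℝ):ℂ) = -(a:ℂ)/(((u:ℝ):ℂ)*((w:ℝ):ℂ)*((a:ℂ)+X)) := by
      rw [hτ'R]
      push_cast
      ring
    have r1 : (((T:ℂ)^2-β^2))⁻¹ = ((a:ℂ)+X)*((a:ℂ)+z)/(2*(a:ℂ)*(z-X)) := by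
      rw [hT2mβ, inv_div]
    have r2 : (((T:ℂ)^2+1))⁻¹ = ((a:ℂ)+X)/(2*(a:ℂ)) := by
      rw [hT21', inv_div]
    have s1 : -2*((a:ℂ)-z)/((T:ℂ)^2-β^2) = -(((a:ℂ)-z)*((a:ℂ)+X)*((a:ℂ)+z))/((a:ℂ)*(z-X)) := by
      rw [div_eq_mul_inv, r1]
      field_simp
    have s2 : (-2*z/((T:ℂ)^2+1) : ℂ) = -(z*((a:ℂ)+X))/((a:ℂ)) := by
      rw [div_eq_mul_inv, r2]
      field_simp
    have s3 : 2*(a:ℂ)*(1-(T:ℂ)^2)/(((T:ℂ)^2+1)^2) = X*((a:ℂ)+X)/((a:ℂ)) := by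
      rw [div_eq_mul_inv, ← inv_pow, r2, h5]
      field_simp
    have hD3 : D = -(((a:ℂ)+X)*((a:ℂ)^2-X^2))/((a:ℂ)*(z-X)) := by
      rw [hD2, s1, s2, s3]
      field_simp
      ring
    rw [hτ'C, hD3, hsq]
    push_cast
    set P : ℂ := ((u:ℝ):ℂ)*((w:ℝ):ℂ) with hP_def
    have hPne : P ≠ 0 := mul_ne_zero hUC hWC
    have hrhs : -((P : ℂ)/((x:ℂ) - z)) = P/(z-X) := by
      rw [show ((x:ℂ) - z) = -(z - X) by rw [hX_def]; ring, div_neg, neg_neg]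
    calc -(a:ℂ)/(P*((a:ℂ)+X)) * (-(((a:ℂ)+X)*((a:ℂ)^2-X^2))/((a:ℂ)*(z-X)))
        = ((a:ℂ)^2-X^2)/(P*(z-X)) := by field_simp
      _ = P^2/(P*(z-X)) := by rw [huwC]
      _ = P/(z-X) := by rw [pow_two, mul_div_mul_left _ _ hPne]
      _ = -((P : ℂ)/((x:ℂ) - z)) := hrhs.symm
  have : τ' • D = -((Real.sqrt (a^2 - x^2) : ℝ) / ((x:ℂ) - z)) := by
    rw [← key]; exact Complex.real_smul
  rw [this] at hcomp
  exact hcomp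

lemma J_eval (a : ℝ) (ha : 0 < a) (z β : ℂ) (hz : 0 < z.im) (hβ : β.im < 0)
    (hβ2 : β^2*((a:ℂ)+z) = (a:ℂ)-z) :
    ∫ x in (-a)..a, ((Real.sqrt (a^2 - x^2) : ℝ) : ℂ) / ((x:ℂ) - z)
      = Real.pi * Complex.I * β * ((a:ℂ)+z) - Real.pi * z := by
  set g : ℝ → ℂ := fun x => ((Real.sqrt (a^2 - x^2) : ℝ) : ℂ) / ((x:ℂ) - z) with hg_def
  set F : ℝ → ℂ := fun y => Phi a z β (Real.sqrt (a - y) / Real.sqrt (a + y)) with hF_def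
  have hzim : 0 < z.im := hz
  have hgc : Continuous g := by
    apply Continuous.div
    · exact Complex.continuous_ofReal.comp
        (Real.continuous_sqrt.comp (by continuity))
    · exact (Complex.continuous_ofReal.sub continuous_const)
    · exact fun x => coe_sub_ne' z hzim.ne' x
  have hM : ∀ x : ℝ, ‖g x‖ ≤ a / z.im := by
    intro x
    rw [hg_def]
    simp only [norm_div]
    have h1 : ‖(((Real.sqrt (a^2-x^2)) : ℝ) : ℂ)‖ ≤ a := by
      rw [Complex.norm_real, Real.norm_eq_abs, abs_of_nonneg (Real.sqrt_nonneg _)]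
      calc Real.sqrt (a^2 - x^2) ≤ Real.sqrt (a^2) := Real.sqrt_le_sqrt (by nlinarith)
        _ = a := Real.sqrt_sq ha.le
    have h2 : z.im ≤ ‖(x:ℂ) - z‖ := by
      have := Complex.abs_im_le_norm ((x:ℂ) - z)
      rw [Complex.sub_im, Complex.ofReal_im, zero_sub, abs_neg] at this
      calc z.im ≤ |z.im| := le_abs_self _
        _ ≤ ‖(x:ℂ) - z‖ := this
    exact div_le_div₀ ha.le h1 hzim (by exact_mod_cast h2)
  have hInt : ∀ c d : ℝ, IntervalIntegrable g volume c d := fun c d => hgc.intervalIntegrable c d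
  -- FTC on truncations
  have hFTC : ∀ ε : ℝ, 0 < ε → ε < a →
      ∫ x in (-a+ε)..(a-ε), g x = F (-a+ε) - F (a-ε) := by
    intro ε hε hεa
    have hsub : uIcc (-a+ε) (a-ε) ⊆ Ioo (-a) a := by
      rw [uIcc_of_le (by linarith)]
      intro y hy
      rcases hy with ⟨h1', h2'⟩
      exact ⟨by linarith, by linarith⟩
    have hd : ∀ y ∈ uIcc (-a+ε) (a-ε), HasDerivAt F (-(g y)) y := by
      intro y hy
      obtain ⟨h1', h2'⟩ := hsub hy
      exact F_hasDeriv a ha z β hz hβ hβ2 h1' h2'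
    have hInt' : IntervalIntegrable (fun y => -(g y)) volume (-a+ε) (a-ε) :=
      (hInt _ _).neg
    have h0 := integral_eq_sub_of_hasDerivAt hd hInt'
    rw [intervalIntegral.integral_neg] at h0
    linear_combination -h0
  -- limit 1 : integral tends to J
  set J : ℂ := ∫ x in (-a)..a, g x with hJ_def
  have hlim1 : Tendsto (fun ε : ℝ => ∫ x in (-a+ε)..(a-ε), g x) (𝓝[>] 0) (𝓝 J) := by
    rw [tendsto_iff_norm_sub_tendsto_zero]
    have hb : Tendsto (fun ε : ℝ => 2*(a/z.im)*ε) (𝓝[>] 0) (𝓝 0) := by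
      have hco : Continuous (fun ε : ℝ => 2*(a/z.im)*ε) := by continuity
      have := (hco.tendsto 0).mono_left (nhdsWithin_le_nhds (s := Ioi (0:ℝ)))
      simpa using this
    apply squeeze_zero_norm' _ hb
    filter_upwards [Ioo_mem_nhdsGT ha] with ε hε
    obtain ⟨hε0, hεa⟩ := hε
    have hsplit1 : ∫ x in (-a)..a, g x =
        (∫ x in (-a)..(-a+ε), g x) + ∫ x in (-a+ε)..a, g x :=
      (integral_add_adjacent_intervals (hInt _ _) (hInt _ _)).symm
    have hsplit2 : ∫ x in (-a+ε)..a, g x =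
        (∫ x in (-a+ε)..(a-ε), g x) + ∫ x in (a-ε)..a, g x :=
      (integral_add_adjacent_intervals (hInt _ _) (hInt _ _)).symm
    have hn1 : ‖∫ x in (-a)..(-a+ε), g x‖ ≤ (a/z.im) * ε := by
      have := intervalIntegral.norm_integral_le_of_norm_le_const
        (C := a/z.im) (f := g) (a := -a) (b := -a+ε) (fun x _ => hM x)
      simpa [abs_of_pos hε0] using this
    have hn2 : ‖∫ x in (a-ε)..a, g x‖ ≤ (a/z.im) * ε := by
      have := intervalIntegral.norm_integral_le_of_norm_le_const
        (C := a/z.im) (f := g) (a := a-ε) (b := a) (fun x _ => hM x)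
      simpa [abs_of_pos hε0] using this
    have heq : (∫ x in (-a+ε)..(a-ε), g x) - J =
        -((∫ x in (-a)..(-a+ε), g x) + ∫ x in (a-ε)..a, g x) := by
      rw [hJ_def, hsplit1, hsplit2]; ring
    rw [Real.norm_eq_abs, abs_norm, heq, norm_neg]
    calc ‖(∫ x in (-a)..(-a+ε), g x) + ∫ x in (a-ε)..a, g x‖
        ≤ ‖∫ x in (-a)..(-a+ε), g x‖ + ‖∫ x in (a-ε)..a, g x‖ := norm_add_le _ _
      _ ≤ (a/z.im) * ε + (a/z.im) * ε := add_le_add hn1 hn2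
      _ = 2*(a/z.im)*ε := by ring
  -- limit 2 : via F
  have hlim2 : Tendsto (fun ε : ℝ => ∫ x in (-a+ε)..(a-ε), g x) (𝓝[>] 0)
      (𝓝 (0 - Phi a z β 0)) := by
    have hFa : Tendsto (fun ε : ℝ => F (a-ε)) (𝓝[>] 0) (𝓝 (Phi a z β 0)) := by
      have hinner : Tendsto (fun ε : ℝ => Real.sqrt (a-(a-ε)) / Real.sqrt (a+(a-ε)))
          (𝓝[>] 0) (𝓝 0) := by
        have hc : ContinuousAt (fun ε : ℝ => Real.sqrt (a-(a-ε)) / Real.sqrt (a+(a-ε))) 0 := by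
          apply ContinuousAt.div
          · exact (Real.continuous_sqrt.comp (by continuity)).continuousAt
          · exact (Real.continuous_sqrt.comp (by continuity)).continuousAt
          · rw [show a + (a-(0:ℝ)) = 2*a by ring]
            exact (Real.sqrt_pos.mpr (by linarith)).ne'
        have := hc.tendsto.mono_left (nhdsWithin_le_nhds (s := Ioi (0:ℝ)))
        simpa using this
      exact ((phi_continuousAt_zero a z β hβ).tendsto.comp hinner)
    have hFma : Tendsto (fun ε : ℝ => F (-a+ε)) (𝓝[>] 0) (𝓝 0) := by
      have hinner : Tendsto (fun ε : ℝ => Real.sqrt (a-(-a+ε)) / Real.sqrt (a+(-a+ε)))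
          (𝓝[>] 0) atTop := by
        have hnum : Tendsto (fun ε : ℝ => Real.sqrt (a-(-a+ε))) (𝓝[>] 0) (𝓝 (Real.sqrt (a+a))) := by
          have hc : ContinuousAt (fun ε : ℝ => Real.sqrt (a-(-a+ε))) 0 :=
            (Real.continuous_sqrt.comp (by continuity)).continuousAt
          have := hc.tendsto.mono_left (nhdsWithin_le_nhds (s := Ioi (0:ℝ)))
          simpa [show a - (-a+(0:ℝ)) = a+a by ring] using this
        have hden : Tendsto (fun ε : ℝ => (Real.sqrt (a+(-a+ε)))⁻¹) (𝓝[>] 0) atTop := by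
          apply tendsto_inv_nhdsGT_zero.comp
          rw [tendsto_nhdsWithin_iff]
          constructor
          · have hc : ContinuousAt (fun ε : ℝ => Real.sqrt (a+(-a+ε))) 0 :=
              (Real.continuous_sqrt.comp (by continuity)).continuousAt
            have := hc.tendsto.mono_left (nhdsWithin_le_nhds (s := Ioi (0:ℝ)))
            simpa [show a + (-a+(0:ℝ)) = 0 by ring] using this
          · filter_upwards [self_mem_nhdsWithin] with ε hε
            have : (0:ℝ) < ε := hε
            exact Real.sqrt_pos.mpr (by linarith)
        have := Tendsto.pos_mul_atTop (Real.sqrt_pos.mpr (by linarith : (0:ℝ) < a+a)) hnum hden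
        apply this.congr
        intro ε
        rw [div_eq_mul_inv]
      exact (phi_tendsto_atTop a z β hβ).comp hinner
    have := hFma.sub hFa
    apply this.congr'
    filter_upwards [Ioo_mem_nhdsGT ha] with ε hε
    exact (hFTC ε hε.1 hε.2).symm
  have hJval : J = 0 - Phi a z β 0 := tendsto_nhds_unique hlim1 hlim2
  have hgoal : J = Real.pi * Complex.I * β * ((a:ℂ)+z) - Real.pi * z := by
    rw [hJval, phi_zero_val a z β hβ]
    push_cast
    ring
  rw [← hgoal, hJ_def]

/-- reduction of the semicircle integral to an interval integral -/
lemma semicircle_integral (v : ℝ) (hv : 0 < v) (g : ℝ → ℂ) :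
    ∫ x, g x ∂(semicircle v) = ∫ x in (-(2*Real.sqrt v))..(2*Real.sqrt v),
      (Real.sqrt (4*v - x^2) / (2*Real.pi*v)) • g x := by
  set a := 2*Real.sqrt v with ha_def
  have ha : 0 < a := by positivity
  set ρ : ℝ → ℝ := fun x => Real.sqrt (4*v - x^2)/(2*Real.pi*v) with hρ_def
  have hρ_nonneg : ∀ x, 0 ≤ ρ x := fun x => by positivity
  have hρ_meas : Measurable ρ := by
    apply Measurable.div
    · exact (Real.continuous_sqrt.comp (by continuity)).measurable
    · exact measurable_const
  set κ : ℝ → ℝ≥0 := fun x => Real.toNNReal (Set.indicator (Icc (-a) a) ρ x) with hκ_def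
  have hκ_meas : Measurable κ :=
    (hρ_meas.indicator measurableSet_Icc).real_toNNReal
  have hden : (Set.indicator (Icc (-a) a)
      (fun x => ENNReal.ofReal (ρ x))) = fun x => (κ x : ℝ≥0∞) := by
    funext x
    rw [hκ_def]
    by_cases hx : x ∈ Icc (-a) a
    · simp [Set.indicator_of_mem hx, ENNReal.ofReal]
    · simp [Set.indicator_of_notMem hx]
  have hsc : semicircle v = volume.withDensity (fun x => (κ x : ℝ≥0∞)) := by
    rw [semicircle, if_neg (not_le.mpr hv), ← hden]
  rw [hsc, integral_withDensity_eq_integral_smul hκ_meas g]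
  have hind : (fun x => κ x • g x) = Set.indicator (Icc (-a) a) (fun x => ρ x • g x) := by
    funext x
    by_cases hx : x ∈ Icc (-a) a
    · rw [Set.indicator_of_mem hx, hκ_def]
      simp only [Set.indicator_of_mem hx]
      rw [NNReal.smul_def, Real.coe_toNNReal _ (hρ_nonneg x)]
    · rw [Set.indicator_of_notMem hx, hκ_def]
      simp [Set.indicator_of_notMem hx]
  rw [hind, MeasureTheory.integral_indicator measurableSet_Icc, integral_Icc_eq_integral_Ioc,
    ← intervalIntegral.integral_of_le (by linarith : -a ≤ a)]

/-- The Cauchy–Stieltjes transform `G(z) = ∫ (x-z)⁻¹ sc(σ²)(dx)` of the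
semicircle law of variance `σ² > 0` satisfies `σ²G(z)² + zG(z) + 1 = 0` and `Im G(z) > 0`,
and it is the unique such root of this quadratic in the upper half-plane. -/
theorem semicircle_stieltjes_quadratic
    (v : ℝ) (hv : 0 < v) (z : ℂ) (hz : 0 < z.im)
    (G : ℂ) (hG : G = ∫ x : ℝ, ((x : ℂ) - z)⁻¹ ∂(semicircle v)) :
    (v : ℂ) * G ^ 2 + z * G + 1 = 0 ∧ 0 < G.im ∧
      ∀ w : ℂ, (v : ℂ) * w ^ 2 + z * w + 1 = 0 → 0 < w.im → w = G := by
  set a : ℝ := 2*Real.sqrt v with ha_def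
  have ha : 0 < a := by positivity
  have ha2 : a^2 = 4*v := by
    rw [ha_def, mul_pow, Real.sq_sqrt hv.le]; ring
  have haz : (a:ℂ) + z ≠ 0 := coe_add_ne' z hz.ne' a
  -- construct β
  have hqim : (((a:ℂ)-z)/((a:ℂ)+z)).im < 0 := by
    rw [Complex.div_im]
    rw [div_sub_div_same]
    apply div_neg_of_neg_of_pos
    · simp only [Complex.sub_im, Complex.sub_re, Complex.add_re, Complex.add_im,
        Complex.ofReal_im, Complex.ofReal_re]
      nlinarith [hz, ha]
    · exact Complex.normSq_pos.mpr haz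
  obtain ⟨b, hb⟩ : ∃ b : ℂ, b^2 = ((a:ℂ)-z)/((a:ℂ)+z) := by
    refine ⟨(((a:ℂ)-z)/((a:ℂ)+z)) ^ (((2:ℕ):ℂ))⁻¹, ?_⟩
    have := Complex.cpow_nat_inv_pow (((a:ℂ)-z)/((a:ℂ)+z)) (two_ne_zero)
    exact_mod_cast this
  have hbim : b.im ≠ 0 := by
    intro h
    rw [← hb] at hqim
    rw [sq, Complex.mul_im, h] at hqim
    simp at hqim
  set β : ℂ := if b.im < 0 then b else -b with hβ_def
  have hβim : β.im < 0 := by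
    rw [hβ_def]
    split_ifs with h
    · exact h
    · simp only [Complex.neg_im]
      push_neg at h
      rcases lt_or_eq_of_le h with h' | h'
      · linarith
      · exact absurd h'.symm hbim
  have hβsq : β^2 = ((a:ℂ)-z)/((a:ℂ)+z) := by
    rw [hβ_def]
    split_ifs
    · exact hb
    · rw [neg_pow]; simp [hb]
  have hβ2 : β^2 * ((a:ℂ)+z) = (a:ℂ)-z := by
    rw [hβsq, div_mul_cancel₀ _ haz]
  -- value of G
  have hred := semicircle_integral v hv (fun x => ((x:ℂ) - z)⁻¹)
  rw [← ha_def] at hred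
  have hsplit : ∀ x : ℝ, (Real.sqrt (4*v - x^2) / (2*Real.pi*v)) • ((x:ℂ) - z)⁻¹
      = ((2*Real.pi*v)⁻¹ : ℝ) • (((Real.sqrt (a^2 - x^2) : ℝ) : ℂ) / ((x:ℂ) - z)) := by
    intro x
    rw [Complex.real_smul, Complex.real_smul]
    rw [show 4*v - x^2 = a^2 - x^2 by rw [ha2]]
    push_cast
    field_simp
  have hGval : G = ((2*Real.pi*v)⁻¹ : ℝ) •
      (Real.pi * Complex.I * β * ((a:ℂ)+z) - Real.pi * z) := by
    rw [hG, hred]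
    rw [show (fun x => (Real.sqrt (4*v - x^2) / (2*Real.pi*v)) • ((x:ℂ) - z)⁻¹) =
      (fun x => ((2*Real.pi*v)⁻¹ : ℝ) • (((Real.sqrt (a^2 - x^2) : ℝ) : ℂ) / ((x:ℂ) - z)))
      from funext hsplit]
    rw [intervalIntegral.integral_smul]
    rw [J_eval a ha z β hz hβim hβ2]
  -- simplified closed form
  have hvC : (v:ℂ) ≠ 0 := by exact_mod_cast hv.ne'
  have hπ : (Real.pi:ℂ) ≠ 0 := by exact_mod_cast Real.pi_ne_zero
  have hca : ((a:ℝ):ℂ)^2 = 4*(v:ℂ) := by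
    have := congrArg (fun r : ℝ => (r:ℂ)) ha2
    push_cast at this
    exact this
  have hG2 : G = (Complex.I*β*((a:ℂ)+z) - z)/(2*(v:ℂ)) := by
    rw [hGval, Complex.real_smul]
    push_cast
    field_simp
  have hs2 : (Complex.I*β*((a:ℂ)+z))^2 = z^2 - 4*(v:ℂ) := by
    linear_combination (β^2*((a:ℂ)+z)^2)*Complex.I_sq + (-((a:ℂ)+z))*hβ2 + (-1)*hca
  have hquad : (v:ℂ)*G^2 + z*G + 1 = 0 := by
    rw [hG2]
    field_simp
    linear_combination hs2
  -- positivity of Im G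
  have hGim : 0 < G.im := by
    set h : ℝ → ℂ := fun x => (Real.sqrt (4*v - x^2) / (2*Real.pi*v)) • ((x:ℂ) - z)⁻¹
      with hh_def
    have hGint : G = ∫ x in (-a)..a, h x := hG.trans hred
    have hinv_cont : Continuous (fun x : ℝ => ((x:ℂ) - z)⁻¹) := by
      apply Continuous.inv₀
      · exact Complex.continuous_ofReal.sub continuous_const
      · exact fun x => coe_sub_ne' z hz.ne' x
    have hρcont : Continuous (fun x : ℝ => Real.sqrt (4*v - x^2) / (2*Real.pi*v)) := by
      apply Continuous.div
      · exact Real.continuous_sqrt.comp (by continuity)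
      · exact continuous_const
      · intro x; positivity
    have hhc : Continuous h := hρcont.smul hinv_cont
    have him : G.im = ∫ x in (-a)..a, (h x).im := by
      rw [hGint, intervalIntegral.integral_of_le (by linarith : -a ≤ a),
        intervalIntegral.integral_of_le (by linarith : -a ≤ a)]
      have hint : Integrable h (volume.restrict (Ioc (-a) a)) :=
        hhc.integrableOn_Ioc
      have := ContinuousLinearMap.integral_comp_comm Complex.imCLM hint
      simp only [Complex.imCLM_apply] at this
      rw [← this]
    rw [him]
    apply intervalIntegral_pos_of_pos_on
    · exact (Complex.continuous_im.comp hhc).intervalIntegrable _ _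
    · intro x hx
      rw [hh_def]
      simp only [Complex.smul_im]
      apply mul_pos
      · have h4v : 0 < 4*v - x^2 := by
          rcases hx with ⟨h1, h2⟩
          nlinarith [ha2]
        positivity
      · rw [Complex.inv_im]
        apply div_pos
        · simp only [Complex.sub_im, Complex.ofReal_im, zero_sub, neg_neg]
          exact hz
        · exact Complex.normSq_pos.mpr (coe_sub_ne' z hz.ne' x)
    · linarith
  refine ⟨hquad, hGim, ?_⟩
  intro w hw hwim
  by_contra hne
  have hfac : (w - G)*((v:ℂ)*(w+G) + z) = 0 := by linear_combination hw - hquad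
  have h2 : (v:ℂ)*(w+G) + z = 0 := by
    rcases mul_eq_zero.mp hfac with h | h
    · exact absurd (sub_eq_zero.mp h) hne
    · exact h
  have hprod : (v:ℂ)*w*G = 1 := by linear_combination w*h2 - hw
  have hGne : G ≠ 0 := by
    intro h
    rw [h] at hGim
    simp at hGim
  have hw_eq : w = ((v:ℂ)*G)⁻¹ := by
    field_simp
    linear_combination hprod
  have hwim_neg : w.im < 0 := by
    rw [hw_eq, Complex.inv_im]
    apply div_neg_of_neg_of_pos
    · have hvg : ((v:ℂ) * G).im = v * G.im := by simp [Complex.mul_im]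
      rw [hvg]
      exact neg_lt_zero.mpr (mul_pos hv hGim)
    · exact Complex.normSq_pos.mpr (mul_ne_zero hvC hGne)
  linarith

end SCaux

end
end
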